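/- arXiv:2112.13326 — 11 statements merged into one kernel-verified Lean document; each statement's English description precedes it below -/
import Mathlib

section
/- Let A be an irreducible tridiagonal matrix in Mat_{d+1}(F), S an invertible diagonal matrix, and B = S A S^{-1}. Then the following are equivalent: (i) A_{i,i-1} = B_{i,i-1} for 1 ≤ i ≤ d; (ii) A_{i-1,i} = B_{i-1,i} for 1 ≤ i ≤ d; (iii) A - B is diagonal; (iv) A = B; (v) S_{i,i} = S_{0,0} for 0 ≤ i ≤ d. -/
/-- For an irreducible tridiagonal matrix A and B = S A S⁻¹ with S
invertible diagonal, five conditions are equivalent. -/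
theorem stmt2 {F : Type*} [Field F] {d : ℕ}
    (A B S : Matrix (Fin (d+1)) (Fin (d+1)) F)
    (hAtri : ∀ i j, (1:ℤ) < |(i.val:ℤ) - (j.val:ℤ)| → A i j = 0)
    (hAirr : ∀ i j, |(i.val:ℤ) - (j.val:ℤ)| = 1 → A i j ≠ 0)
    (hS : S.IsDiag) (hSinv : IsUnit S.det)
    (hB : B = S * A * S⁻¹) :
    List.TFAE [
      ∀ i : Fin d, A i.succ i.castSucc = B i.succ i.castSucc,
      ∀ i : Fin d, A i.castSucc i.succ = B i.castSucc i.succ,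
      (A - B).IsDiag,
      A = B,
      ∀ i, S i i = S 0 0] := by
  set s : Fin (d+1) → F := fun i => S i i with hsdef
  have hSd : S = Matrix.diagonal s := by
    ext i j
    by_cases h : i = j
    · subst h; simp [Matrix.diagonal, s]
    · rw [hS h]; simp [Matrix.diagonal, h]
  have hs : ∀ i, s i ≠ 0 := by
    intro i hzero
    rw [hSd, Matrix.det_diagonal] at hSinv
    exact hSinv.ne_zero (Finset.prod_eq_zero (Finset.mem_univ i) hzero)
  have hSinv' : S⁻¹ = Matrix.diagonal (fun i => (s i)⁻¹) := by
    rw [hSd]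
    apply Matrix.inv_eq_right_inv
    rw [Matrix.diagonal_mul_diagonal]
    convert Matrix.diagonal_one with i
    exact mul_inv_cancel₀ (hs i)
  have hBij : ∀ i j, B i j = s i * A i j * (s j)⁻¹ := by
    intro i j
    rw [hB, hSinv', hSd, Matrix.mul_diagonal, Matrix.diagonal_mul]
  have hsub : ∀ i : Fin d, |((i.succ.val : ℤ)) - (i.castSucc.val : ℤ)| = 1 := by
    intro i; simp [Fin.val_succ]
  have hsub' : ∀ i : Fin d, |((i.castSucc.val : ℤ)) - (i.succ.val : ℤ)| = 1 := by
    intro i; simp [Fin.val_succ]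
  have hne : ∀ i : Fin d, i.succ ≠ i.castSucc := by
    intro i h
    have := congrArg Fin.val h
    simp [Fin.val_succ] at this
  have conclude : (∀ i : Fin d, s i.succ = s i.castSucc) → ∀ i, S i i = S 0 0 := by
    intro step
    have key : ∀ i, s i = s 0 := by
      intro i
      induction i using Fin.induction with
      | zero => rfl
      | succ i ih => rw [step i]; exact ih
    exact fun i => key i
  tfae_have 1 → 5 := by
    intro h1
    refine conclude fun i => ?_
    have heq := (h1 i).symm
    rw [hBij] at heq
    have hA := hAirr i.succ i.castSucc (hsub i)
    have h3 : s i.succ * A i.succ i.castSucc = A i.succ i.castSucc * s i.castSucc := by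
      calc s i.succ * A i.succ i.castSucc
          = s i.succ * A i.succ i.castSucc * (s i.castSucc)⁻¹ * s i.castSucc := by
            rw [mul_assoc _ _ (s i.castSucc), inv_mul_cancel₀ (hs _), mul_one]
        _ = A i.succ i.castSucc * s i.castSucc := by rw [heq]
    exact mul_right_cancel₀ hA (h3.trans (mul_comm _ _))
  tfae_have 2 → 5 := by
    intro h2
    refine conclude fun i => ?_
    have heq := (h2 i).symm
    rw [hBij] at heq
    have hA := hAirr i.castSucc i.succ (hsub' i)
    have h3 : s i.castSucc * A i.castSucc i.succ = A i.castSucc i.succ * s i.succ := by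
      calc s i.castSucc * A i.castSucc i.succ
          = s i.castSucc * A i.castSucc i.succ * (s i.succ)⁻¹ * s i.succ := by
            rw [mul_assoc _ _ (s i.succ), inv_mul_cancel₀ (hs _), mul_one]
        _ = A i.castSucc i.succ * s i.succ := by rw [heq]
    exact (mul_right_cancel₀ hA (h3.trans (mul_comm _ _))).symm
  tfae_have 5 → 4 := by
    intro h5
    have e : ∀ k, s k = s 0 := h5
    ext i j
    rw [hBij, e i, e j, mul_comm (s 0), mul_assoc, mul_inv_cancel₀ (hs 0), mul_one]
  tfae_have 4 → 3 := by
    intro h4; rw [h4, sub_self]; exact Matrix.isDiag_zero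
  tfae_have 3 → 1 := by
    intro h3 i
    have := h3 (hne i)
    simpa [sub_eq_zero, Matrix.sub_apply] using this
  tfae_have 3 → 2 := by
    intro h3 i
    have := h3 (hne i).symm
    simpa [sub_eq_zero, Matrix.sub_apply] using this
  tfae_finish
end

section
/- Let A be an irreducible tridiagonal matrix in Mat_{d+1}(F), S an invertible diagonal matrix, and B = S A S^{-1}. Then the following are equivalent: (i) A_{i,i-1} = -B_{i,i-1} for 1 ≤ i ≤ d; (ii) A_{i-1,i} = -B_{i-1,i} for 1 ≤ i ≤ d; (iii) A + B is diagonal; (iv) S_{i,i} = (-1)^i S_{0,0} for 0 ≤ i ≤ d. Moreover, if these hold then (A+B)_{i,i} = 2 A_{i,i} for 0 ≤ i ≤ d. -/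
private lemma aux4 {F : Type*} [Field F] (a p q : F) (ha : a ≠ 0) (hq : q ≠ 0) :
    (a = -(p * a * q⁻¹)) ↔ p = -q := by
  constructor
  · intro h
    have h2 := congrArg (· * q) h
    rw [neg_mul, mul_assoc, inv_mul_cancel₀ hq, mul_one] at h2
    have h3 : a * q = a * (-p) := by rw [h2]; ring
    have := mul_left_cancel₀ ha h3
    linear_combination this
  · intro h
    subst h
    field_simp

/-- For an irreducible tridiagonal matrix A and B = S A S⁻¹ with S
invertible diagonal, four conditions are equivalent; moreover if they hold then
A + B has (i,i)-entry 2 A_{i,i}. -/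
theorem stmt4 {F : Type*} [Field F] {d : ℕ}
    (A B S : Matrix (Fin (d+1)) (Fin (d+1)) F)
    (hAtri : ∀ i j, (1:ℤ) < |(i.val:ℤ) - (j.val:ℤ)| → A i j = 0)
    (hAirr : ∀ i j, |(i.val:ℤ) - (j.val:ℤ)| = 1 → A i j ≠ 0)
    (hS : S.IsDiag) (hSinv : IsUnit S.det)
    (hB : B = S * A * S⁻¹) :
    List.TFAE [
      ∀ i : Fin d, A i.succ i.castSucc = - B i.succ i.castSucc,
      ∀ i : Fin d, A i.castSucc i.succ = - B i.castSucc i.succ,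
      (A + B).IsDiag,
      ∀ i, S i i = (-1 : F)^(i:ℕ) * S 0 0] ∧
    ((A + B).IsDiag → ∀ i, (A + B) i i = 2 * A i i) := by
  set s : Fin (d+1) → F := fun i => S i i with hs
  have hSdiag : S = Matrix.diagonal s := by
    ext i j
    by_cases h : i = j
    · subst h; simp [Matrix.diagonal, hs]
    · simp [Matrix.diagonal, h, hS h]
  have hsne : ∀ i, s i ≠ 0 := by
    intro i hzero
    rw [hSdiag, Matrix.det_diagonal] at hSinv
    exact hSinv.ne_zero (Finset.prod_eq_zero (Finset.mem_univ i) hzero)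
  have hBij : ∀ i j, B i j = s i * A i j * (s j)⁻¹ := by
    intro i j
    have hinv : S⁻¹ = Matrix.diagonal (fun i => (s i)⁻¹) := by
      apply Matrix.inv_eq_right_inv
      rw [hSdiag, Matrix.diagonal_mul_diagonal]
      ext i j
      by_cases h : i = j
      · subst h; simp [Matrix.diagonal, mul_inv_cancel₀ (hsne i)]
      · simp [Matrix.diagonal, h]
    rw [hB, hinv, hSdiag, Matrix.mul_diagonal, Matrix.diagonal_mul]
  have habs1 : ∀ i : Fin d, |((i.succ.val : ℤ)) - (i.castSucc.val : ℤ)| = 1 := by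
    intro i
    rw [Fin.val_succ, Fin.coe_castSucc]
    push_cast
    rw [abs_eq (by norm_num : (0:ℤ) ≤ 1)]
    omega
  have habs2 : ∀ i : Fin d, |((i.castSucc.val : ℤ)) - (i.succ.val : ℤ)| = 1 := by
    intro i
    rw [Fin.val_succ, Fin.coe_castSucc]
    push_cast
    rw [abs_eq (by norm_num : (0:ℤ) ≤ 1)]
    omega
  -- The common condition
  have e1 : (∀ i : Fin d, A i.succ i.castSucc = - B i.succ i.castSucc) ↔
      (∀ i : Fin d, s i.succ = - s i.castSucc) := by
    constructor
    · intro h i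
      have := (aux4 _ _ _ (hAirr _ _ (habs1 i)) (hsne i.castSucc)).1 (by rw [← hBij]; exact h i)
      exact this
    · intro h i
      rw [hBij]
      exact (aux4 _ _ _ (hAirr _ _ (habs1 i)) (hsne i.castSucc)).2 (h i)
  have e2 : (∀ i : Fin d, A i.castSucc i.succ = - B i.castSucc i.succ) ↔
      (∀ i : Fin d, s i.succ = - s i.castSucc) := by
    constructor
    · intro h i
      have := (aux4 _ _ _ (hAirr _ _ (habs2 i)) (hsne i.succ)).1 (by rw [← hBij]; exact h i)
      linear_combination this
    · intro h i
      rw [hBij]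
      exact (aux4 _ _ _ (hAirr _ _ (habs2 i)) (hsne i.succ)).2 (by linear_combination h i)
  have e3 : (A + B).IsDiag ↔ (∀ i : Fin d, s i.succ = - s i.castSucc) := by
    constructor
    · intro h i
      have hne : i.succ ≠ i.castSucc := by
        intro h'
        have := congrArg Fin.val h'
        rw [Fin.val_succ, Fin.coe_castSucc] at this
        omega
      have h0 : (A + B) i.succ i.castSucc = 0 := h hne
      rw [Matrix.add_apply, hBij] at h0
      have : A i.succ i.castSucc = -(s i.succ * A i.succ i.castSucc * (s i.castSucc)⁻¹) := by
        linear_combination h0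
      exact (aux4 _ _ _ (hAirr _ _ (habs1 i)) (hsne i.castSucc)).1 this
    · intro h i j hij
      rw [Matrix.add_apply, hBij]
      have hv : i.val ≠ j.val := fun h' => hij (Fin.ext h')
      by_cases h1 : i.val = j.val + 1
      · have hjd : j.val < d := by omega
        set k : Fin d := ⟨j.val, hjd⟩ with hk
        have hj : j = k.castSucc := by apply Fin.ext; simp [hk]
        have hi : i = k.succ := by apply Fin.ext; simp [hk, Fin.val_succ]; omega
        rw [hi, hj, h k]
        have ha := hsne k.castSucc
        field_simp
        ring
      · by_cases h2 : j.val = i.val + 1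
        · have hid : i.val < d := by omega
          set k : Fin d := ⟨i.val, hid⟩ with hk
          have hi : i = k.castSucc := by apply Fin.ext; simp [hk]
          have hj : j = k.succ := by apply Fin.ext; simp [hk, Fin.val_succ]; omega
          rw [hi, hj, h k, inv_neg]
          have ha := hsne k.castSucc
          field_simp
          ring
        · have habs : (1:ℤ) < |(i.val:ℤ) - (j.val:ℤ)| := by
            rw [lt_abs]; omega
          rw [hAtri _ _ habs]
          ring
  have e4 : (∀ i, s i = (-1 : F)^(i:ℕ) * s 0) ↔
      (∀ i : Fin d, s i.succ = - s i.castSucc) := by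
    constructor
    · intro h i
      rw [h i.succ, h i.castSucc, Fin.val_succ, Fin.coe_castSucc, pow_succ]
      ring
    · intro h i
      induction i using Fin.induction with
      | zero => simp
      | succ k ih =>
        rw [h k, ih, Fin.val_succ, Fin.coe_castSucc, pow_succ]
        ring
  constructor
  · tfae_have 1 ↔ 2 := e1.trans e2.symm
    tfae_have 2 ↔ 3 := e2.trans e3.symm
    tfae_have 3 ↔ 4 := e3.trans e4.symm
    tfae_finish
  · intro _ i
    rw [Matrix.add_apply, hBij, mul_comm (s i) (A i i), mul_assoc,
      mul_inv_cancel₀ (hsne i), mul_one]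
    ring
end

section
/- Let (θ_i)_{i=0}^d; (θ*_i)_{i=0}^d; (φ_i)_{i=1}^d; (ϕ_i)_{i=1}^d be a parameter array over F. Then: φ_1 - ϕ_1 = (θ*_1 - θ*_0)(θ_0 - θ_d), φ_d - ϕ_1 = (θ*_d - θ*_0)(θ_{d-1} - θ_d), and ϕ_d - φ_1 = (θ*_d - θ*_0)(θ_1 - θ_0). -/
/-- A parameter array over `F` of diameter `d`: conditions (i)--(v) of the Leonard
system classification. -/
def IsParamArray (F : Type*) [Field F] (d : ℕ) (θ θs φ ϕ : ℕ → F) : Prop :=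
  (∀ i ≤ d, ∀ j ≤ d, i ≠ j → θ i ≠ θ j ∧ θs i ≠ θs j) ∧
  (∀ i, 1 ≤ i → i ≤ d → φ i ≠ 0 ∧ ϕ i ≠ 0) ∧
  (∀ i, 1 ≤ i → i ≤ d →
    φ i = ϕ 1 * (∑ l ∈ Finset.range i, (θ l - θ (d - l)) / (θ 0 - θ d))
      + (θs i - θs 0) * (θ (i-1) - θ d)) ∧
  (∀ i, 1 ≤ i → i ≤ d →
    ϕ i = φ 1 * (∑ l ∈ Finset.range i, (θ l - θ (d - l)) / (θ 0 - θ d))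
      + (θs i - θs 0) * (θ (d - i + 1) - θ 0)) ∧
  (∀ i, 2 ≤ i → i ≤ d - 1 →
    (θ (i-2) - θ (i+1)) / (θ (i-1) - θ i) = (θs (i-2) - θs (i+1)) / (θs (i-1) - θs i) ∧
    ∀ j, 2 ≤ j → j ≤ d - 1 →
      (θ (i-2) - θ (i+1)) / (θ (i-1) - θ i) = (θ (j-2) - θ (j+1)) / (θ (j-1) - θ j))

/-- basic relations among φ₁, ϕ₁, φ_d, ϕ_d for a parameter array. -/
theorem stmt8 {F : Type*} [Field F] {d : ℕ} (hd : 1 ≤ d)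
    (θ θs φ ϕ : ℕ → F) (hpa : IsParamArray F d θ θs φ ϕ) :
    φ 1 - ϕ 1 = (θs 1 - θs 0) * (θ 0 - θ d) ∧
    φ d - ϕ 1 = (θs d - θs 0) * (θ (d-1) - θ d) ∧
    ϕ d - φ 1 = (θs d - θs 0) * (θ 1 - θ 0) := by
  obtain ⟨h1, h2, h3, h4, h5⟩ := hpa
  have hne : θ 0 - θ d ≠ 0 :=
    sub_ne_zero.mpr ((h1 0 (Nat.zero_le d) d le_rfl (by omega)).1)
  have hsum : ∑ l ∈ Finset.range d, (θ l - θ (d - l)) / (θ 0 - θ d) = 1 := by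
    rw [← Finset.sum_div]
    have key : ∑ l ∈ Finset.range d, (θ l - θ (d - l)) = θ 0 - θ d := by
      have h2' : ∑ l ∈ Finset.range d, θ (d - l) = ∑ l ∈ Finset.range d, θ (l + 1) := by
        rw [← Finset.sum_range_reflect (fun l => θ (l + 1)) d]
        apply Finset.sum_congr rfl
        intro l hl
        simp only [Finset.mem_range] at hl
        congr 1
        omega
      rw [Finset.sum_sub_distrib, h2', ← Finset.sum_sub_distrib,
        Finset.sum_range_sub' θ d]
    rw [key, div_self hne]
  have hsum1 : ∑ l ∈ Finset.range 1, (θ l - θ (d - l)) / (θ 0 - θ d) = 1 := by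
    simp [Finset.sum_range_one, div_self hne]
  have e1 := h3 1 le_rfl hd
  have e2 := h3 d hd le_rfl
  have e3 := h4 d hd le_rfl
  rw [hsum1] at e1
  rw [hsum] at e2 e3
  have hdd : d - d + 1 = 1 := by omega
  rw [hdd] at e3
  refine ⟨?_, ?_, ?_⟩
  · rw [e1]; ring
  · rw [e2]; ring
  · rw [e3]; ring
end

section
/- Let (θ_i)_{i=0}^d; (θ*_i)_{i=0}^d; (φ_i)_{i=1}^d; (ϕ_i)_{i=1}^d be a parameter array over F. Then (θ_ℓ - θ_{d-ℓ})/(θ_0 - θ_d) = (θ*_ℓ - θ*_{d-ℓ})/(θ*_0 - θ*_d) for 0 ≤ ℓ ≤ d. -/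
section Aux

variable {F : Type*} [Field F] {d : ℕ} {β : F} {a b : ℕ → F}

/-- The Casoratian of two solutions of the recurrence is constant. -/
lemma pa_casoratian (ha : ∀ j, j + 3 ≤ d → a (j+2) = β * a (j+1) - a j)
    (hb : ∀ j, j + 3 ≤ d → b (j+2) = β * b (j+1) - b j) :
    ∀ j, j + 2 ≤ d → a j * b (j+1) - a (j+1) * b j = a 0 * b 1 - a 1 * b 0 := by
  intro j
  induction j with
  | zero => intro _; norm_num
  | succ m ih =>
    intro h
    show a (m+1) * b (m+2) - a (m+2) * b (m+1) = _
    rw [ha m (by omega), hb m (by omega)]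
    linear_combination ih (by omega)

/-- Central symmetry of the two-point function. -/
lemma pa_kappa_symm (ha : ∀ j, j + 3 ≤ d → a (j+2) = β * a (j+1) - a j)
    (hb : ∀ j, j + 3 ≤ d → b (j+2) = β * b (j+1) - b j) :
    ∀ n i k, i + n + k + 1 = d →
      a i * b (i+n) - a (i+n) * b i = a k * b (k+n) - a (k+n) * b k := by
  intro n
  induction n using Nat.twoStepInduction with
  | zero => intro i k h; norm_num
  | one =>
    intro i k h
    have h1 := pa_casoratian ha hb i (by omega)
    have h2 := pa_casoratian ha hb k (by omega)
    linear_combination h1 - h2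
  | more m ih1 ih2 =>
    intro i k h
    have e1 : a (i + (m+2)) = β * a (i + (m+1)) - a (i + m) := by
      have h' := ha (i + m) (by omega)
      rw [show i + m + 2 = i + (m+2) by ring, show i + m + 1 = i + (m+1) by ring] at h'
      exact h'
    have f1 : b (i + (m+2)) = β * b (i + (m+1)) - b (i + m) := by
      have h' := hb (i + m) (by omega)
      rw [show i + m + 2 = i + (m+2) by ring, show i + m + 1 = i + (m+1) by ring] at h'
      exact h'
    have e2 : a (k + 2) = β * a (k+1) - a k := ha k (by omega)
    have f2 : b (k + 2) = β * b (k+1) - b k := hb k (by omega)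
    have g1 := ih2 i (k+1) (by omega)
    have g2 := ih1 i (k+2) (by omega)
    rw [show k + 1 + (m+1) = k + (m+2) by ring] at g1
    rw [show k + 2 + m = k + (m+2) by ring] at g2
    calc a i * b (i+(m+2)) - a (i+(m+2)) * b i
        = β * (a i * b (i+(m+1)) - a (i+(m+1)) * b i)
          - (a i * b (i+m) - a (i+m) * b i) := by rw [e1, f1]; ring
      _ = β * (a (k+1) * b (k+(m+2)) - a (k+(m+2)) * b (k+1))
          - (a (k+2) * b (k+(m+2)) - a (k+(m+2)) * b (k+2)) := by rw [g1, g2]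
      _ = a k * b (k+(m+2)) - a (k+(m+2)) * b k := by rw [e2, f2]; ring

lemma pa_kappa_pair (ha : ∀ j, j + 3 ≤ d → a (j+2) = β * a (j+1) - a j)
    (hb : ∀ j, j + 3 ≤ d → b (j+2) = β * b (j+1) - b j) :
    ∀ i j, i + 1 ≤ d → j + 1 ≤ d →
      (a i * b j - a j * b i) + (a (d-1-i) * b (d-1-j) - a (d-1-j) * b (d-1-i)) = 0 := by
  intro i j hi hj
  rcases le_total i j with hij | hij
  · have h := pa_kappa_symm ha hb (j - i) i (d-1-j) (by omega)
    rw [show i + (j-i) = j by omega, show d-1-j + (j-i) = d-1-i by omega] at h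
    linear_combination h
  · have h := pa_kappa_symm ha hb (i - j) j (d-1-i) (by omega)
    rw [show j + (i-j) = i by omega, show d-1-i + (i-j) = d-1-j by omega] at h
    linear_combination -h

lemma pa_double_sum (ha : ∀ j, j + 3 ≤ d → a (j+2) = β * a (j+1) - a j)
    (hb : ∀ j, j + 3 ≤ d → b (j+2) = β * b (j+1) - b j) {l : ℕ} (hl : l + l ≤ d) :
    ∑ p ∈ (Finset.Ico l (d-l)) ×ˢ (Finset.Ico 0 l ∪ Finset.Ico (d-l) d),
      (a p.1 * b p.2 - a p.2 * b p.1) = 0 := by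
  apply Finset.sum_involution (fun p _ => ((d-1-p.1 : ℕ), (d-1-p.2 : ℕ)))
  · intro p hp
    simp only [Finset.mem_product, Finset.mem_Ico, Finset.mem_union] at hp
    exact pa_kappa_pair ha hb p.1 p.2 (by omega) (by omega)
  · rintro ⟨p1, p2⟩ hp hne hcontra
    simp only [Finset.mem_product, Finset.mem_Ico, Finset.mem_union] at hp
    rw [Prod.mk.injEq] at hcontra
    apply hne
    have hpq : p1 = p2 := by omega
    simp only [hpq]
    ring
  · intro p hp
    simp only [Finset.mem_product, Finset.mem_Ico, Finset.mem_union] at hp ⊢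
    omega
  · intro p hp
    simp only [Finset.mem_product, Finset.mem_Ico, Finset.mem_union] at hp
    have h1 : d - 1 - (d - 1 - p.1) = p.1 := by omega
    have h2 : d - 1 - (d - 1 - p.2) = p.2 := by omega
    simp only [h1, h2]

lemma pa_sums_cross (ha : ∀ j, j + 3 ≤ d → a (j+2) = β * a (j+1) - a j)
    (hb : ∀ j, j + 3 ≤ d → b (j+2) = β * b (j+1) - b j) {l : ℕ} (hl : l + l ≤ d) :
    (∑ t ∈ Finset.Ico l (d-l), a t) * (∑ t ∈ Finset.Ico 0 d, b t)
      = (∑ t ∈ Finset.Ico l (d-l), b t) * (∑ t ∈ Finset.Ico 0 d, a t) := by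
  classical
  have hdisj : Disjoint (Finset.Ico 0 l) (Finset.Ico (d-l) d) := by
    simp only [Finset.disjoint_left, Finset.mem_Ico]
    intro x hx hx'
    omega
  have hsplit : ∀ f : ℕ → F, ∑ t ∈ Finset.Ico 0 d, f t
      = (∑ t ∈ Finset.Ico l (d-l), f t)
        + ∑ t ∈ Finset.Ico 0 l ∪ Finset.Ico (d-l) d, f t := by
    intro f
    rw [Finset.sum_union hdisj]
    rw [← Finset.sum_Ico_consecutive f (Nat.zero_le (d-l)) (by omega : d - l ≤ d)]
    rw [← Finset.sum_Ico_consecutive f (Nat.zero_le l) (by omega : l ≤ d - l)]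
    ring
  have hds := pa_double_sum ha hb hl
  have e1 : ∑ p ∈ (Finset.Ico l (d-l)) ×ˢ (Finset.Ico 0 l ∪ Finset.Ico (d-l) d),
      (a p.1 * b p.2 - a p.2 * b p.1)
      = (∑ t ∈ Finset.Ico l (d-l), a t) * (∑ t ∈ Finset.Ico 0 l ∪ Finset.Ico (d-l) d, b t)
        - (∑ t ∈ Finset.Ico 0 l ∪ Finset.Ico (d-l) d, a t) * (∑ t ∈ Finset.Ico l (d-l), b t) := by
    rw [Finset.sum_sub_distrib]
    congr 1
    · rw [Finset.sum_mul_sum]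
      simp only [Finset.sum_product]
    · rw [Finset.sum_product]
      simp only [← Finset.sum_mul]
      rw [← Finset.mul_sum]

  rw [e1] at hds
  rw [hsplit a, hsplit b]
  linear_combination hds

lemma pa_telescope {F : Type*} [Field F] (x : ℕ → F) :
    ∀ i j, i ≤ j → x i - x j = ∑ t ∈ Finset.Ico i j, (x t - x (t+1)) := by
  intro i j hij
  induction j, hij using Nat.le_induction with
  | base => simp
  | succ n hn ih =>
    rw [Finset.sum_Ico_succ_top (by omega), ← ih]
    ring

lemma pa_main {d : ℕ} {β : F} {x y : ℕ → F}
    (hx : ∀ j, j + 3 ≤ d → x (j+2) - x (j+3) = β * (x (j+1) - x (j+2)) - (x j - x (j+1)))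
    (hy : ∀ j, j + 3 ≤ d → y (j+2) - y (j+3) = β * (y (j+1) - y (j+2)) - (y j - y (j+1))) :
    ∀ l ≤ d, (x l - x (d-l)) * (y 0 - y d) = (y l - y (d-l)) * (x 0 - x d) := by
  have cross : ∀ m, m + m ≤ d →
      (x m - x (d-m)) * (y 0 - y d) = (y m - y (d-m)) * (x 0 - x d) := by
    intro m hm
    have hs := pa_sums_cross (d := d) (β := β) (a := fun j => x j - x (j+1))
      (b := fun j => y j - y (j+1)) (fun j hj => hx j hj) (fun j hj => hy j hj) hm
    rw [pa_telescope x m (d-m) (by omega), pa_telescope x 0 d (by omega),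
        pa_telescope y m (d-m) (by omega), pa_telescope y 0 d (by omega)]
    exact hs
  intro l hld
  rcases le_or_gt (l + l) d with h2l | h2l
  · exact cross l h2l
  · have h := cross (d - l) (by omega)
    rw [show d - (d - l) = l by omega] at h
    linear_combination -h

end Aux

/-- the ratio identity relating the eigenvalue and dual eigenvalue
sequences of a parameter array. -/
theorem stmt10 {F : Type*} [Field F] {d : ℕ} (hd : 1 ≤ d)
    (θ θs φ ϕ : ℕ → F) (hpa : IsParamArray F d θ θs φ ϕ) :
    ∀ l ≤ d, (θ l - θ (d - l)) / (θ 0 - θ d) = (θs l - θs (d - l)) / (θs 0 - θs d) := by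
  obtain ⟨hdist, -, -, -, hv⟩ := hpa
  have h0d : (0:ℕ) ≠ d := by omega
  have hθ : θ 0 - θ d ≠ 0 := sub_ne_zero.mpr ((hdist 0 (Nat.zero_le d) d le_rfl h0d).1)
  have hθs : θs 0 - θs d ≠ 0 := sub_ne_zero.mpr ((hdist 0 (Nat.zero_le d) d le_rfl h0d).2)
  by_cases hd3 : 3 ≤ d
  · have hrecθ : ∀ j, j + 3 ≤ d → θ (j+2) - θ (j+3)
        = ((θ 0 - θ 3) / (θ 1 - θ 2)) * (θ (j+1) - θ (j+2)) - (θ (j+1) - θ (j+2))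
          - (θ j - θ (j+1)) := by
      intro j hj
      have h2 : (θ j - θ (j+3)) / (θ (j+1) - θ (j+2)) = (θ 0 - θ 3) / (θ 1 - θ 2) :=
        (hv (j+2) (by omega) (by omega)).2 2 (by omega) (by omega)
      have hne : θ (j+1) - θ (j+2) ≠ 0 :=
        sub_ne_zero.mpr ((hdist (j+1) (by omega) (j+2) (by omega) (by omega)).1)
      have h3 := (div_eq_iff hne).mp h2
      linear_combination h3
    have hrecθs : ∀ j, j + 3 ≤ d → θs (j+2) - θs (j+3)
        = ((θ 0 - θ 3) / (θ 1 - θ 2)) * (θs (j+1) - θs (j+2)) - (θs (j+1) - θs (j+2))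
          - (θs j - θs (j+1)) := by
      intro j hj
      have h1 : (θ j - θ (j+3)) / (θ (j+1) - θ (j+2))
          = (θs j - θs (j+3)) / (θs (j+1) - θs (j+2)) :=
        (hv (j+2) (by omega) (by omega)).1
      have h2 : (θ j - θ (j+3)) / (θ (j+1) - θ (j+2)) = (θ 0 - θ 3) / (θ 1 - θ 2) :=
        (hv (j+2) (by omega) (by omega)).2 2 (by omega) (by omega)
      rw [h1] at h2
      have hne : θs (j+1) - θs (j+2) ≠ 0 :=
        sub_ne_zero.mpr ((hdist (j+1) (by omega) (j+2) (by omega) (by omega)).2)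
      have h3 := (div_eq_iff hne).mp h2
      linear_combination h3
    have main := pa_main (β := (θ 0 - θ 3) / (θ 1 - θ 2) - 1)
      (fun j hj => by linear_combination hrecθ j hj)
      (fun j hj => by linear_combination hrecθs j hj)
    intro l hld
    rw [div_eq_div_iff hθ hθs]
    exact main l hld
  · have main := pa_main (d := d) (β := (0:F)) (x := θ) (y := θs)
      (fun j hj => absurd hj (by omega)) (fun j hj => absurd hj (by omega))
    intro l hld
    rw [div_eq_div_iff hθ hθs]
    exact main l hld
end

section
/- Let (θ_i); (θ*_i); (φ_i); (ϕ_i) and (θ'_i); (θ*_i); (φ'_i); (ϕ'_i) be two parameter arrays over F with the same dual eigenvalue sequence (θ*_i). If φ'_i = φ_i and ϕ'_i = ϕ_i for 1 ≤ i ≤ d, then there exists ζ ∈ F such that θ'_i = θ_i + ζ for 0 ≤ i ≤ d. -/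
/-- two parameter arrays with the same dual eigenvalue sequence and the
same split sequences have eigenvalue sequences differing by a constant. -/
theorem stmt11 {F : Type*} [Field F] {d : ℕ} (hd : 1 ≤ d)
    (θ θ' θs φ ϕ φ' ϕ' : ℕ → F)
    (hpa : IsParamArray F d θ θs φ ϕ)
    (hpa' : IsParamArray F d θ' θs φ' ϕ')
    (hφ : ∀ i, 1 ≤ i → i ≤ d → φ' i = φ i)
    (hϕ : ∀ i, 1 ≤ i → i ≤ d → ϕ' i = ϕ i) :
    ∃ ζ : F, ∀ i ≤ d, θ' i = θ i + ζ := by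
  obtain ⟨hdist, hnz, hiii, hiv, -⟩ := hpa
  obtain ⟨hdist', hnz', hiii', hiv', -⟩ := hpa'
  have hD0 : θ 0 - θ d ≠ 0 :=
    sub_ne_zero.mpr ((hdist 0 (Nat.zero_le d) d le_rfl (by omega)).1)
  have hD'0 : θ' 0 - θ' d ≠ 0 :=
    sub_ne_zero.mpr ((hdist' 0 (Nat.zero_le d) d le_rfl (by omega)).1)
  have hc : ∀ i, 1 ≤ i → i ≤ d → θs i - θs 0 ≠ 0 := fun i h1 h2 =>
    sub_ne_zero.mpr ((hdist i h2 0 (Nat.zero_le d) (by omega)).2)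
  have hφ1 : φ 1 ≠ 0 := (hnz 1 le_rfl hd).1
  have hϕ1 : ϕ 1 ≠ 0 := (hnz 1 le_rfl hd).2
  -- evaluate (iii) at i = 1 for both arrays
  have e1 : φ 1 = ϕ 1 + (θs 1 - θs 0) * (θ 0 - θ d) := by
    have h := hiii 1 le_rfl hd
    simpa [Finset.sum_range_one, div_self hD0] using h
  have e1' : φ 1 = ϕ 1 + (θs 1 - θs 0) * (θ' 0 - θ' d) := by
    have h := hiii' 1 le_rfl hd
    rw [hφ 1 le_rfl hd, hϕ 1 le_rfl hd] at h
    simpa [Finset.sum_range_one, div_self hD'0] using h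
  have hDD : θ' 0 - θ' d = θ 0 - θ d := by
    have h0 := e1.symm.trans e1'
    have h2 : (θs 1 - θs 0) * (θ' 0 - θ' d) = (θs 1 - θs 0) * (θ 0 - θ d) := by
      linear_combination -h0
    exact mul_left_cancel₀ (hc 1 le_rfl hd) h2
  -- equation A from condition (iii)
  have hA : ∀ i, 1 ≤ i → i ≤ d →
      ϕ 1 * ((∑ l ∈ Finset.range i, (θ' l - θ' (d - l)) / (θ' 0 - θ' d))
        - (∑ l ∈ Finset.range i, (θ l - θ (d - l)) / (θ 0 - θ d)))
      = -((θs i - θs 0) * (θ' (i-1) - θ (i-1) - (θ' 0 - θ 0))) := by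
    intro i h1 h2
    have h := hiii i h1 h2
    have h' := hiii' i h1 h2
    rw [hφ i h1 h2, hϕ 1 le_rfl hd] at h'
    linear_combination h - h' - (θs i - θs 0) * hDD
  -- equation B from condition (iv)
  have hB : ∀ i, 1 ≤ i → i ≤ d →
      φ 1 * ((∑ l ∈ Finset.range i, (θ' l - θ' (d - l)) / (θ' 0 - θ' d))
        - (∑ l ∈ Finset.range i, (θ l - θ (d - l)) / (θ 0 - θ d)))
      = -((θs i - θs 0) * (θ' (d - i + 1) - θ (d - i + 1) - (θ' 0 - θ 0))) := by
    intro i h1 h2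
    have h := hiv i h1 h2
    have h' := hiv' i h1 h2
    rw [hϕ i h1 h2, hφ 1 le_rfl hd] at h'
    linear_combination h - h'
  -- symmetry relation
  have hsym : ∀ i, 1 ≤ i → i ≤ d →
      φ 1 * (θ' (i-1) - θ (i-1) - (θ' 0 - θ 0))
        = ϕ 1 * (θ' (d - i + 1) - θ (d - i + 1) - (θ' 0 - θ 0)) := by
    intro i h1 h2
    have ha := hA i h1 h2
    have hb := hB i h1 h2
    have key : (θs i - θs 0) * (φ 1 * (θ' (i-1) - θ (i-1) - (θ' 0 - θ 0)))
        = (θs i - θs 0) * (ϕ 1 * (θ' (d - i + 1) - θ (d - i + 1) - (θ' 0 - θ 0))) := by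
      linear_combination φ 1 * ha - ϕ 1 * hb
    exact mul_left_cancel₀ (hc i h1 h2) key
  -- recurrence relation
  have hrec : ∀ i, 1 ≤ i → i + 1 ≤ d →
      (θs (i+1) - θs 1) * (θ' i - θ i - (θ' 0 - θ 0))
        = (θs i - θs 0) * (θ' (i-1) - θ (i-1) - (θ' 0 - θ 0)) := by
    intro i h1 h2
    have ha := hA i h1 (by omega)
    rw [hDD] at ha
    have has := hA (i+1) (by omega) h2
    rw [Finset.sum_range_succ, Finset.sum_range_succ, hDD, Nat.add_sub_cancel] at has
    -- the step identity with denominators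
    have hstep : ϕ 1 * ((θ' i - θ' (d - i)) / (θ 0 - θ d) - (θ i - θ (d - i)) / (θ 0 - θ d))
        = -((θs (i+1) - θs 0) * (θ' i - θ i - (θ' 0 - θ 0)))
          + (θs i - θs 0) * (θ' (i-1) - θ (i-1) - (θ' 0 - θ 0)) := by
      linear_combination has - ha
    have hstep2 : ϕ 1 * (θ' i - θ' (d - i) - (θ i - θ (d - i)))
        = (θ 0 - θ d) * (-((θs (i+1) - θs 0) * (θ' i - θ i - (θ' 0 - θ 0)))
          + (θs i - θs 0) * (θ' (i-1) - θ (i-1) - (θ' 0 - θ 0))) := by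
      field_simp at hstep
      linear_combination hstep
    have hidx : d - (i+1) + 1 = d - i := by omega
    have hsym' := hsym (i+1) (by omega) h2
    rw [hidx, Nat.add_sub_cancel] at hsym'
    have key : (θ 0 - θ d) * ((θs (i+1) - θs 1) * (θ' i - θ i - (θ' 0 - θ 0)))
        = (θ 0 - θ d) * ((θs i - θs 0) * (θ' (i-1) - θ (i-1) - (θ' 0 - θ 0))) := by
      linear_combination hstep2 - hsym' + (θ' i - θ i - (θ' 0 - θ 0)) * e1
    exact mul_left_cancel₀ hD0 key
  -- b i = 0 by induction
  have hzero : ∀ i, i ≤ d → θ' i - θ i - (θ' 0 - θ 0) = 0 := by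
    intro i
    induction i with
    | zero => intro _; ring
    | succ n ih =>
      intro hnd
      by_cases hcase : n + 1 = d
      · rw [hcase]; linear_combination -hDD
      · have hr := hrec (n+1) (by omega) (by omega)
        rw [Nat.add_sub_cancel] at hr
        rw [ih (by omega), mul_zero] at hr
        have hne : θs (n+1+1) - θs 1 ≠ 0 :=
          sub_ne_zero.mpr ((hdist (n+2) (by omega) 1 hd (by omega)).2)
        exact (mul_eq_zero.mp hr).resolve_left hne
  exact ⟨θ' 0 - θ 0, fun i hi => by have := hzero i hi; linear_combination this⟩
end

section
/- Let (θ_i); (θ*_i); (φ_i); (ϕ_i) and (θ'_i); (θ*_i); (φ'_i); (ϕ'_i) be two parameter arrays over F with the same dual eigenvalue sequence. If φ'_i = ϕ_i and ϕ'_i = φ_i for 1 ≤ i ≤ d, then there exists ζ ∈ F such that θ'_i = θ_{d-i} + ζ for 0 ≤ i ≤ d. -/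
/-- two parameter arrays with the same dual eigenvalue sequence and
swapped split sequences have eigenvalue sequences related by reversal plus a constant. -/
theorem stmt12 {F : Type*} [Field F] {d : ℕ} (hd : 1 ≤ d)
    (θ θ' θs φ ϕ φ' ϕ' : ℕ → F)
    (hpa : IsParamArray F d θ θs φ ϕ)
    (hpa' : IsParamArray F d θ' θs φ' ϕ')
    (hφ : ∀ i, 1 ≤ i → i ≤ d → φ' i = ϕ i)
    (hϕ : ∀ i, 1 ≤ i → i ≤ d → ϕ' i = φ i) :
    ∃ ζ : F, ∀ i ≤ d, θ' i = θ (d - i) + ζ := by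
  obtain ⟨hdis, hnz, h3, h4, _⟩ := hpa
  obtain ⟨hdis', hnz', h3', h4', _⟩ := hpa'
  -- basic nonvanishing facts
  have hD0 : θ 0 - θ d ≠ 0 :=
    sub_ne_zero.mpr (hdis 0 (Nat.zero_le d) d le_rfl (by omega)).1
  have hD : θ d - θ 0 ≠ 0 :=
    sub_ne_zero.mpr (hdis d le_rfl 0 (Nat.zero_le d) (by omega)).1
  have hD0' : θ' 0 - θ' d ≠ 0 :=
    sub_ne_zero.mpr (hdis' 0 (Nat.zero_le d) d le_rfl (by omega)).1
  have hs10 : θs 1 - θs 0 ≠ 0 :=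
    sub_ne_zero.mpr (hdis 1 hd 0 (Nat.zero_le d) (by omega)).2
  -- sums at i = 1 equal 1
  have hS1 : (∑ l ∈ Finset.range 1, (θ l - θ (d - l)) / (θ 0 - θ d)) = 1 := by
    simp [div_self hD0]
  have hS1' : (∑ l ∈ Finset.range 1, (θ' l - θ' (d - l)) / (θ' 0 - θ' d)) = 1 := by
    simp [div_self hD0']
  have e3 := h3 1 le_rfl hd
  rw [hS1] at e3
  norm_num at e3
  -- e3 : φ 1 = ϕ 1 + (θs 1 - θs 0) * (θ 0 - θ d)
  have e4' := h4' 1 le_rfl hd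
  rw [hS1', hϕ 1 le_rfl hd, hφ 1 le_rfl hd, Nat.sub_add_cancel hd] at e4'
  norm_num at e4'
  -- e4' : φ 1 = ϕ 1 + (θs 1 - θs 0) * (θ' d - θ' 0)
  have hE : θ' 0 - θ' d = θ d - θ 0 := by
    have h2 : (θs 1 - θs 0) * ((θ 0 - θ d) - (θ' d - θ' 0)) = 0 := by
      linear_combination e4' - e3
    have h3 := (mul_eq_zero.mp h2).resolve_left hs10
    have h4 := sub_eq_zero.mp h3
    linear_combination h4
  obtain ⟨f, hf⟩ : ∃ f : ℕ → F, ∀ i, f i = θ' i - θ (d - i) - (θ' 0 - θ d) :=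
    ⟨_, fun _ => rfl⟩
  have hf0 : f 0 = 0 := by rw [hf, Nat.sub_zero]; ring
  have hfd : f d = 0 := by rw [hf, Nat.sub_self]; linear_combination -hE
  have hθ'd : θ' d = θ 0 + (θ' 0 - θ d) := by linear_combination -hE
  have hθ'0 : θ' 0 = θ d + (θ' 0 - θ d) := by ring
  -- the sum difference lemma
  have hT : ∀ i ≤ d,
      (∑ l ∈ Finset.range i, (θ' l - θ' (d - l)) / (θ' 0 - θ' d))
        - (∑ l ∈ Finset.range i, (θ l - θ (d - l)) / (θ 0 - θ d))
      = (∑ l ∈ Finset.range i, (f l - f (d - l))) / (θ d - θ 0) := by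
    intro i hi
    rw [← Finset.sum_sub_distrib, Finset.sum_div]
    refine Finset.sum_congr rfl ?_
    intro l hl
    have hld' : l ≤ d := by
      have := Finset.mem_range.mp hl; omega
    have hss : d - (d - l) = l := Nat.sub_sub_self hld'
    rw [hf l, hf (d - l), hss, hE]
    field_simp
    ring
  -- key equation A
  have eqA : ∀ i, 1 ≤ i → i ≤ d →
      φ 1 * (∑ l ∈ Finset.range i, (f l - f (d - l))) =
        -((θs i - θs 0) * (θ d - θ 0) * f (i - 1)) := by
    intro i h1 h2
    have a1 := h3' i h1 h2
    rw [hφ i h1 h2, hϕ 1 le_rfl hd] at a1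
    have a2 := h4 i h1 h2
    have hsub : φ 1 * ((∑ l ∈ Finset.range i, (θ' l - θ' (d - l)) / (θ' 0 - θ' d))
        - (∑ l ∈ Finset.range i, (θ l - θ (d - l)) / (θ 0 - θ d)))
        = (θs i - θs 0) * ((θ (d - i + 1) - θ 0) - (θ' (i - 1) - θ' d)) := by
      linear_combination a2 - a1
    rw [hT i h2, ← mul_div_assoc, div_eq_iff hD] at hsub
    have hθ'i : θ' (i - 1) = f (i - 1) + θ (d - i + 1) + (θ' 0 - θ d) := by
      rw [hf (i - 1), show d - (i - 1) = d - i + 1 by omega]; ring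
    rw [hθ'i, hθ'd] at hsub
    linear_combination hsub
  -- key equation B
  have eqB : ∀ i, 1 ≤ i → i ≤ d →
      ϕ 1 * (∑ l ∈ Finset.range i, (f l - f (d - l))) =
        -((θs i - θs 0) * (θ d - θ 0) * f (d - i + 1)) := by
    intro i h1 h2
    have a1 := h4' i h1 h2
    rw [hϕ i h1 h2, hφ 1 le_rfl hd] at a1
    have a2 := h3 i h1 h2
    have hsub : ϕ 1 * ((∑ l ∈ Finset.range i, (θ' l - θ' (d - l)) / (θ' 0 - θ' d))
        - (∑ l ∈ Finset.range i, (θ l - θ (d - l)) / (θ 0 - θ d)))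
        = (θs i - θs 0) * ((θ (i - 1) - θ d) - (θ' (d - i + 1) - θ' 0)) := by
      linear_combination a2 - a1
    rw [hT i h2, ← mul_div_assoc, div_eq_iff hD] at hsub
    have hθ'j : θ' (d - i + 1) = f (d - i + 1) + θ (i - 1) + (θ' 0 - θ d) := by
      rw [hf (d - i + 1), show d - (d - i + 1) = i - 1 by omega]; ring
    rw [hθ'j, hθ'0] at hsub
    linear_combination hsub
  -- main induction
  have key : ∀ i, i + 1 ≤ d → f i = 0 ∧ f (d - i) = 0 := by
    intro i
    induction i using Nat.strong_induction_on with
    | _ i ih =>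
      intro hi
      rcases Nat.eq_zero_or_pos i with hi0 | hi1
      · subst hi0
        exact ⟨hf0, by simpa using hfd⟩
      · have h1 : 1 ≤ i + 1 := by omega
        have h2 : i + 1 ≤ d := hi
        have hTval : (∑ l ∈ Finset.range (i + 1), (f l - f (d - l))) = f i - f (d - i) := by
          rw [Finset.sum_range_succ]
          have hzero : (∑ l ∈ Finset.range i, (f l - f (d - l))) = 0 := by
            apply Finset.sum_eq_zero
            intro l hl
            have hl' : l < i := Finset.mem_range.mp hl
            obtain ⟨hl1, hl2⟩ := ih l hl' (by omega)
            rw [hl1, hl2, sub_zero]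
          rw [hzero, zero_add]
        have hA := eqA (i + 1) h1 h2
        have hB := eqB (i + 1) h1 h2
        rw [hTval, show i + 1 - 1 = i by omega] at hA
        rw [hTval, show d - (i + 1) + 1 = d - i by omega] at hB
        have hfac : (θs (i + 1) - θs 1) * (θ d - θ 0) * (f i - f (d - i)) = 0 := by
          linear_combination hA - hB - (f i - f (d - i)) * e3
        have hs1i : θs (i + 1) - θs 1 ≠ 0 :=
          sub_ne_zero.mpr (hdis (i + 1) h2 1 hd (by omega)).2
        have hX : f i - f (d - i) = 0 := by
          rcases mul_eq_zero.mp hfac with h | h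
          · exact absurd ((mul_eq_zero.mp h).resolve_left hs1i) hD
          · exact h
        have hsi0 : θs (i + 1) - θs 0 ≠ 0 :=
          sub_ne_zero.mpr (hdis (i + 1) h2 0 (Nat.zero_le d) (by omega)).2
        have hfi : f i = 0 := by
          rw [hX, mul_zero] at hA
          have h0 := hA.symm
          rw [neg_eq_zero] at h0
          rcases mul_eq_zero.mp h0 with h | h
          · exact absurd ((mul_eq_zero.mp h).resolve_left hsi0) hD
          · exact h
        refine ⟨hfi, ?_⟩
        have := sub_eq_zero.mp hX
        rw [← this, hfi]
  refine ⟨θ' 0 - θ d, ?_⟩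
  intro i hi
  have hfi : f i = 0 := by
    rcases eq_or_lt_of_le hi with rfl | hlt
    · exact hfd
    · exact (key i (by omega)).1
  rw [hf] at hfi
  linear_combination hfi
end

section
/- Let A, A* and B, A* be Leonard pairs on V, and set K = A - B. Then the following are equivalent: (i) K commutes with A*; (ii) K lies in the subalgebra generated by A* and (A - K, A*) is a Leonard pair on V; (iii) -K lies in the subalgebra generated by A* and (B - (-K), A*) is a Leonard pair on V. -/
/-- An irreducible tridiagonal matrix. -/
def IsIrredTridiag {F : Type*} [Field F] {d : ℕ}
    (M : Matrix (Fin (d+1)) (Fin (d+1)) F) : Prop :=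
  (∀ i j, (1:ℤ) < |(i.val:ℤ) - (j.val:ℤ)| → M i j = 0) ∧
  (∀ i j, |(i.val:ℤ) - (j.val:ℤ)| = 1 → M i j ≠ 0)

-- powers of irreducible tridiagonal: column 0 triangular structure
lemma tri_pow {F : Type*} [Field F] {d : ℕ} {M : Matrix (Fin (d+1)) (Fin (d+1)) F}
    (hM : IsIrredTridiag M) (k : ℕ) :
    (∀ j : Fin (d+1), k < j.val → (M ^ k) j 0 = 0) ∧
    (∀ j : Fin (d+1), j.val = k → (M ^ k) j 0 ≠ 0) := by
  induction k with
  | zero =>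
    constructor
    · intro j hj
      simp only [pow_zero, Matrix.one_apply]
      rw [if_neg]
      intro h; rw [h] at hj; simp at hj
    · intro j hj
      have : j = 0 := by ext; simpa using hj
      subst this
      simp [Matrix.one_apply]
  | succ k ih =>
    have hsum : ∀ j : Fin (d+1), (M ^ (k+1)) j 0 = ∑ i, M j i * (M ^ k) i 0 := by
      intro j; rw [pow_succ', Matrix.mul_apply]
    constructor
    · intro j hj
      rw [hsum, Finset.sum_eq_zero]
      intro i _
      by_cases hi : k < i.val
      · rw [ih.1 i hi, mul_zero]
      · rw [hM.1 j i (by push_neg at hi; rw [lt_abs]; omega), zero_mul]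
    · intro j hj
      have hk : k < d + 1 := by omega
      rw [hsum, Finset.sum_eq_single (⟨k, hk⟩ : Fin (d+1))]
      · exact mul_ne_zero (hM.2 j ⟨k, hk⟩ (by simp only [Fin.val_mk]; rw [abs_eq zero_le_one]; omega)) (ih.2 ⟨k, hk⟩ rfl)
      · intro i _ hi
        by_cases hik : k < i.val
        · rw [ih.1 i hik, mul_zero]
        · have : i.val < k := by
            rcases lt_or_eq_of_le (not_lt.mp hik) with h | h
            · exact h
            · exact absurd (Fin.ext h : i = ⟨k, hk⟩) hi
          rw [hM.1 j i (by rw [lt_abs]; omega), zero_mul]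
      · intro h; exact absurd (Finset.mem_univ _) h

lemma mem_adjoin_of_commute {F V : Type*} [Field F] [AddCommGroup V] [Module F V] {d : ℕ}
    (As : Module.End F V) (b : Module.Basis (Fin (d+1)) F V)
    (hM : IsIrredTridiag (LinearMap.toMatrix b b As))
    (K : Module.End F V) (hc : Commute K As) :
    K ∈ Algebra.adjoin F ({As} : Set (Module.End F V)) := by
  set M := LinearMap.toMatrix b b As with hMdef
  set v : Fin (d+1) → V := fun k => (As ^ k.val) (b 0) with hv
  have hrepr : ∀ (n : ℕ) (j : Fin (d+1)), b.repr ((As ^ n) (b 0)) j = (M ^ n) j 0 := by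
    intro n j
    rw [hMdef, LinearMap.toMatrix_pow, LinearMap.toMatrix_apply]
  -- linear independence of v
  have li : LinearIndependent F v := by
    rw [Fintype.linearIndependent_iff]
    intro g hg
    have hcoord : ∀ j : Fin (d+1), ∑ i, g i * (M ^ i.val) j 0 = 0 := by
      intro j
      have := congrArg (fun x => b.repr x j) hg
      simpa [map_sum, hv, hrepr] using this
    have key : ∀ k : Fin (d+1), (∀ i : Fin (d+1), k.val < i.val → g i = 0) → g k = 0 := by
      intro k hgt
      have h := hcoord k
      rw [Finset.sum_eq_single k] at h
      · exact (mul_eq_zero.mp h).resolve_right ((tri_pow hM k.val).2 k rfl)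
      · intro i _ hi
        rcases lt_or_gt_of_ne (fun h' : i.val = k.val => hi (Fin.ext h')) with h' | h'
        · rw [(tri_pow hM i.val).1 k h', mul_zero]
        · rw [hgt i h', zero_mul]
      · intro h'; exact absurd (Finset.mem_univ _) h'
    have main : ∀ m : ℕ, ∀ k : Fin (d+1), d - m ≤ k.val → g k = 0 := by
      intro m
      induction m with
      | zero => intro k hk; exact key k (fun i hi => absurd i.isLt (by omega))
      | succ m ih => intro k hk; exact key k (fun i hi => ih i (by omega))
    exact fun k => main d k (by omega)
  have hcard : Fintype.card (Fin (d+1)) = Module.finrank F V := by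
    rw [Module.finrank_eq_card_basis b]
  let e : Module.Basis (Fin (d+1)) F V := basisOfLinearIndependentOfCardEqFinrank li hcard
  have he : ∀ k, e k = v k := by
    intro k; rw [show ⇑e = v from coe_basisOfLinearIndependentOfCardEqFinrank li hcard]
  set c : Fin (d+1) → F := fun k => e.repr (K (b 0)) k with hcdef
  set p : Module.End F V := ∑ k, c k • As ^ k.val with hp
  have hpmem : p ∈ Algebra.adjoin F ({As} : Set (Module.End F V)) := by
    apply Subalgebra.sum_mem
    intro k _
    exact Subalgebra.smul_mem _ (Subalgebra.pow_mem _ (Algebra.self_mem_adjoin_singleton F As) _) _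
  have hKb0 : K (b 0) = p (b 0) := by
    conv_lhs => rw [← e.sum_repr (K (b 0))]
    rw [hp]
    simp only [LinearMap.coe_sum, Finset.sum_apply, LinearMap.smul_apply]
    refine Finset.sum_congr rfl fun k _ => ?_
    rw [he k]
  have : K = p := by
    apply e.ext
    intro j
    rw [he j]
    have hcomm : ∀ n : ℕ, K * As ^ n = As ^ n * K := fun n => (hc.pow_right n).eq
    have h1 : K (v j) = (As ^ j.val) (K (b 0)) := by
      have := congrArg (fun f => f (b 0)) (hcomm j.val)
      simpa [hv, Module.End.mul_apply] using this
    rw [h1, hKb0, hp]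
    simp only [LinearMap.coe_sum, Finset.sum_apply, LinearMap.smul_apply, map_sum, map_smul]
    refine Finset.sum_congr rfl fun k _ => ?_
    congr 1
    have : As ^ j.val * As ^ k.val = As ^ k.val * As ^ j.val := by
      rw [← pow_add, ← pow_add, Nat.add_comm]
    have := congrArg (fun f => f (b 0)) this
    simpa [hv, Module.End.mul_apply] using this
  rw [this]; exact hpmem

/-- A Leonard pair on a vector space `V` of dimension `d+1`. -/
def IsLeonardPair {F V : Type*} [Field F] [AddCommGroup V] [Module F V] (d : ℕ)
    (A As : Module.End F V) : Prop :=
  (∃ b : Module.Basis (Fin (d+1)) F V, IsIrredTridiag (LinearMap.toMatrix b b A) ∧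
      (LinearMap.toMatrix b b As).IsDiag) ∧
  (∃ b : Module.Basis (Fin (d+1)) F V, IsIrredTridiag (LinearMap.toMatrix b b As) ∧
      (LinearMap.toMatrix b b A).IsDiag)

/-- for Leonard pairs A, A* and B, A* on V with K = A - B, the
following are equivalent: K commutes with A*; K is a companion of A, A*;
-K is a companion of B, A*. -/
theorem stmt13 {F V : Type*} [Field F] [AddCommGroup V] [Module F V] {d : ℕ} (hd : 1 ≤ d)
    (A As B : Module.End F V)
    (hA : IsLeonardPair d A As) (hB : IsLeonardPair d B As)
    (K : Module.End F V) (hK : K = A - B) :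
    List.TFAE [
      Commute K As,
      K ∈ Algebra.adjoin F ({As} : Set (Module.End F V)) ∧ IsLeonardPair d (A - K) As,
      (-K) ∈ Algebra.adjoin F ({As} : Set (Module.End F V)) ∧
        IsLeonardPair d (B - (-K)) As] := by
  have hAB : A - K = B := by rw [hK]; abel
  have hBA : B - (-K) = A := by rw [hK]; abel
  obtain ⟨b, hb1, hb2⟩ := hA.2
  tfae_have 1 → 2 := fun h => ⟨mem_adjoin_of_commute As b hb1 K h, hAB ▸ hB⟩
  tfae_have 2 → 3 := fun ⟨hm, _⟩ => ⟨neg_mem hm, hBA ▸ hA⟩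
  tfae_have 3 → 1 := by
    rintro ⟨hm, -⟩
    have h := (Algebra.commute_of_mem_adjoin_self hm).symm
    exact Commute.neg_left_iff.mp h
  tfae_finish
end

section
/- Fix A* = diag(θ*_0, …, θ*_d) with distinct entries, and let Ω be the set of normalized irreducible tridiagonal matrices A in Mat_{d+1}(F) such that A, A* is a Leonard pair on F^{d+1}. For A, B in Ω, the following are equivalent: (i) the Leonard pairs A, A* and B, A* are compatible (i.e., [A, A*] = [B, A*]); (ii) A - B is diagonal; (iii) A_{i-1,i} = B_{i-1,i} for 1 ≤ i ≤ d. -/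
/-- A pair of matrices forming a Leonard pair on F^{d+1}: there is a basis (i.e. an
invertible change-of-basis matrix) in which the first is irreducible tridiagonal and
the second diagonal, and a basis in which the roles are swapped. -/
def IsLeonardPairM {F : Type*} [Field F] {d : ℕ}
    (A As : Matrix (Fin (d+1)) (Fin (d+1)) F) : Prop :=
  (∃ S : Matrix (Fin (d+1)) (Fin (d+1)) F, IsUnit S.det ∧
    IsIrredTridiag (S * A * S⁻¹) ∧ (S * As * S⁻¹).IsDiag) ∧
  (∃ S : Matrix (Fin (d+1)) (Fin (d+1)) F, IsUnit S.det ∧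
    IsIrredTridiag (S * As * S⁻¹) ∧ (S * A * S⁻¹).IsDiag)

/-- Membership in the set Ω: normalized irreducible tridiagonal matrices forming a
Leonard pair with the fixed diagonal matrix `As`. -/
def MemOmega {F : Type*} [Field F] {d : ℕ}
    (As A : Matrix (Fin (d+1)) (Fin (d+1)) F) : Prop :=
  IsIrredTridiag A ∧ (∀ i : Fin d, A i.succ i.castSucc = 1) ∧ IsLeonardPairM A As

/-- for A, B ∈ Ω, compatibility ([A,A*] = [B,A*]) is equivalent to A - B
being diagonal, and to equality of the superdiagonal entries. -/
theorem stmt15 {F : Type*} [Field F] {d : ℕ} (hd : 1 ≤ d)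
    (θs : Fin (d+1) → F) (hθs : Function.Injective θs)
    (As : Matrix (Fin (d+1)) (Fin (d+1)) F) (hAs : As = Matrix.diagonal θs)
    (A B : Matrix (Fin (d+1)) (Fin (d+1)) F)
    (hA : MemOmega As A) (hB : MemOmega As B) :
    List.TFAE [
      A * As - As * A = B * As - As * B,
      (A - B).IsDiag,
      ∀ i : Fin d, A i.castSucc i.succ = B i.castSucc i.succ] := by
  subst hAs
  tfae_have 1 → 2 := by
    intro h i j hij
    have he := congrFun (congrFun h i) j
    simp only [Matrix.sub_apply, Matrix.mul_diagonal, Matrix.diagonal_mul] at he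
    have : (A i j - B i j) * (θs j - θs i) = 0 := by linear_combination he
    rcases mul_eq_zero.mp this with h1 | h1
    · simpa [Matrix.sub_apply, sub_eq_zero] using h1
    · exact ((hij (hθs (sub_eq_zero.mp h1)).symm)).elim
  tfae_have 2 → 3 := by
    intro h i
    have := h (i := i.castSucc) (j := i.succ) (by
      simp [Fin.ext_iff])
    simpa [Matrix.sub_apply, sub_eq_zero] using this
  tfae_have 3 → 1 := by
    intro h
    have hoff : ∀ i j : Fin (d+1), i ≠ j → A i j = B i j := by
      intro i j hij
      rcases lt_trichotomy ((i.val:ℤ) - j.val) 1 with hlt | heq | hgt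
      · rcases lt_trichotomy ((i.val:ℤ) - j.val) (-1) with h2 | h2 | h2
        · -- |i-j| > 1
          rw [hA.1.1 i j (by rw [lt_abs]; omega),
             hB.1.1 i j (by rw [lt_abs]; omega)]
        · -- j = i + 1 : superdiagonal
          have hj : (j:ℕ) = i + 1 := by omega
          have hi' : (i:ℕ) < d := by omega
          have := h ⟨i, hi'⟩
          have hic : (⟨i, hi'⟩ : Fin d).castSucc = i := by ext; simp
          have hjs : (⟨i, hi'⟩ : Fin d).succ = j := by ext; simp [hj]
          rwa [hic, hjs] at this
        · -- i = j or contradiction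
          have : (i:ℕ) = j := by omega
          exact absurd (Fin.ext this) hij
      · -- i = j + 1 : subdiagonal
        have hi : (i:ℕ) = j + 1 := by omega
        have hj' : (j:ℕ) < d := by omega
        have hA1 := hA.2.1 ⟨(j:ℕ), hj'⟩
        have hB1 := hB.2.1 ⟨(j:ℕ), hj'⟩
        have e1 : (⟨(j:ℕ), hj'⟩ : Fin d).succ = i := Fin.ext (by simp [hi])
        have e2 : (⟨(j:ℕ), hj'⟩ : Fin d).castSucc = j := Fin.ext (by simp)
        rw [e1, e2] at hA1 hB1
        rw [hA1, hB1]
      · rw [hA.1.1 i j (by rw [lt_abs]; omega),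
             hB.1.1 i j (by rw [lt_abs]; omega)]
    ext i j
    simp only [Matrix.sub_apply, Matrix.mul_diagonal, Matrix.diagonal_mul]
    by_cases hij : i = j
    · subst hij; ring
    · rw [hoff i j hij]
  tfae_finish
end

section
/- Let A ∈ Ω and let B ∈ Mat_{d+1}(F) be such that B, A* is a Leonard pair on F^{d+1} compatible with A, A*. Then B ∈ Ω; that is, B is normalized irreducible tridiagonal. -/
/-- if A ∈ Ω and B, A* is a Leonard pair compatible with A, A*, then
B ∈ Ω, i.e. B is normalized irreducible tridiagonal. -/
theorem stmt16 {F : Type*} [Field F] {d : ℕ} (hd : 1 ≤ d)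
    (θs : Fin (d+1) → F) (hθs : Function.Injective θs)
    (As : Matrix (Fin (d+1)) (Fin (d+1)) F) (hAs : As = Matrix.diagonal θs)
    (A B : Matrix (Fin (d+1)) (Fin (d+1)) F)
    (hA : MemOmega As A)
    (hBLP : IsLeonardPairM B As)
    (hcompat : A * As - As * A = B * As - As * B) :
    MemOmega As B := by
  obtain ⟨⟨hA1, hA2⟩, hA3, _⟩ := hA
  have key : ∀ i j : Fin (d+1), i ≠ j → B i j = A i j := by
    intro i j hij
    have hcomm : (A - B) * As = As * (A - B) := by
      rw [Matrix.sub_mul, Matrix.mul_sub]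
      exact sub_eq_sub_iff_sub_eq_sub.mp hcompat
    have := congrFun (congrFun hcomm i) j
    rw [hAs] at this
    rw [Matrix.mul_diagonal, Matrix.diagonal_mul] at this
    have hθ : θs j - θs i ≠ 0 := sub_ne_zero.mpr fun h => hij (hθs h).symm
    have : (A - B) i j * (θs j - θs i) = 0 := by linear_combination this
    have := (mul_eq_zero.mp this).resolve_right hθ
    simp only [Matrix.sub_apply, sub_eq_zero] at this
    exact this.symm
  have hne : ∀ i j : Fin (d+1), |(i.val:ℤ) - (j.val:ℤ)| ≠ 0 → i ≠ j := by
    intro i j h hij; subst hij; simp at h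
  refine ⟨⟨fun i j h => ?_, fun i j h => ?_⟩, fun i => ?_, hBLP⟩
  · rw [key i j (hne i j (by omega))]; exact hA1 i j h
  · rw [key i j (hne i j (by omega))]; exact hA2 i j h
  · rw [key _ _ (by simp [Fin.ext_iff, Fin.val_succ])]; exact hA3 i
end

section
/- For A, B in Ω, the Leonard pairs A, A* and B, A* are isomorphic (i.e., there is an algebra isomorphism of End(F^{d+1}) sending A ↦ B and A* ↦ A*) if and only if A = B. -/
open Matrix Polynomial

private lemma sandwich_lemma {F : Type*} [Field F] {n : Type*} [Fintype n] [DecidableEq n]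
    (M : Matrix n n F) (i j : n) :
    Matrix.single i i 1 * M * Matrix.single j j 1 = M i j • Matrix.single i j 1 := by
  ext a b
  by_cases ha : a = i <;> by_cases hb : b = j <;>
    simp [ha, hb, mul_apply, Matrix.single, ite_and, Finset.sum_ite_eq, Finset.sum_ite_eq'] <;>
    split_ifs <;> simp_all

private lemma aeval_diagonal_lemma {F : Type*} [Field F] {n : Type*} [Fintype n] [DecidableEq n]
    (θs : n → F) (p : F[X]) :
    aeval (Matrix.diagonal θs) p = Matrix.diagonal (fun j => p.eval (θs j)) := by
  have h1 := Polynomial.aeval_algHom_apply (Matrix.diagonalAlgHom F (α := F) (n := n)) θs p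
  simp only [Matrix.diagonalAlgHom_apply] at h1
  have h3 : (aeval θs) p = fun j => eval (θs j) p := by
    funext j
    have h2 := Polynomial.aeval_algHom_apply (Pi.evalAlgHom F (fun _ : n => F) j) θs p
    simp only [Pi.evalAlgHom_apply] at h2
    rw [← h2, Polynomial.coe_aeval_eq_eval]
  rw [h1, h3]

/-- for A, B ∈ Ω, the Leonard pairs A, A* and B, A* are isomorphic
(via an algebra automorphism of the matrix algebra sending A ↦ B, A* ↦ A*)
iff A = B. -/
theorem stmt17 {F : Type*} [Field F] {d : ℕ} (hd : 1 ≤ d)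
    (θs : Fin (d+1) → F) (hθs : Function.Injective θs)
    (As : Matrix (Fin (d+1)) (Fin (d+1)) F) (hAs : As = Matrix.diagonal θs)
    (A B : Matrix (Fin (d+1)) (Fin (d+1)) F)
    (hA : MemOmega As A) (hB : MemOmega As B) :
    (∃ σ : Matrix (Fin (d+1)) (Fin (d+1)) F ≃ₐ[F] Matrix (Fin (d+1)) (Fin (d+1)) F,
      σ A = B ∧ σ As = As) ↔ A = B := by
  constructor
  · rintro ⟨σ, hσA, hσAs⟩
    -- σ fixes the diagonal matrix units, via Lagrange interpolation in As
    have hE : ∀ i : Fin (d+1), σ (Matrix.single i i 1) = Matrix.single i i 1 := by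
      intro i
      have hinj : Set.InjOn θs (Finset.univ : Finset (Fin (d+1))) := hθs.injOn
      have key : aeval As (Lagrange.basis Finset.univ θs i) = Matrix.single i i 1 := by
        rw [hAs, aeval_diagonal_lemma]
        ext a b
        rcases eq_or_ne a b with rfl | hab
        · simp only [Matrix.diagonal_apply_eq]
          rcases eq_or_ne a i with rfl | hai
          · rw [Lagrange.eval_basis_self hinj (Finset.mem_univ a)]
            simp [Matrix.single]
          · rw [Lagrange.eval_basis_of_ne (Ne.symm hai) (Finset.mem_univ a)]
            simp [Matrix.single, Ne.symm hai]
        · rw [Matrix.diagonal_apply_ne _ hab]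
          simp only [Matrix.single, of_apply]
          rw [if_neg (by rintro ⟨rfl, rfl⟩; exact hab rfl)]
      have := Polynomial.aeval_algHom_apply σ.toAlgHom As (Lagrange.basis Finset.univ θs i)
      change aeval (σ As) _ = σ (aeval As _) at this
      rw [← key, ← this, hσAs, key]
    -- σ scales each matrix unit
    set c : Fin (d+1) → Fin (d+1) → F := fun i j => σ (Matrix.single i j 1) i j with hc
    have hscale : ∀ i j, σ (Matrix.single i j 1) = c i j • Matrix.single i j 1 := by
      intro i j
      have h0 : Matrix.single i j (1:F)
          = Matrix.single i i 1 * Matrix.single i j 1 * Matrix.single j j 1 := by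
        simp
      calc σ (Matrix.single i j 1)
          = σ (Matrix.single i i 1) * σ (Matrix.single i j 1) * σ (Matrix.single j j 1) := by
            rw [← _root_.map_mul, ← _root_.map_mul, ← h0]
        _ = Matrix.single i i 1 * σ (Matrix.single i j 1) * Matrix.single j j 1 := by
            rw [hE, hE]
        _ = c i j • Matrix.single i j 1 := sandwich_lemma _ i j
    -- entries of B
    have hBA : ∀ i j, B i j = A i j * c i j := by
      intro i j
      have h1 : Matrix.single i i 1 * B * Matrix.single j j 1
          = (A i j * c i j) • Matrix.single i j 1 := by
        rw [← hσA, ← hE i, ← hE j, ← _root_.map_mul, ← _root_.map_mul, sandwich_lemma A i j, _root_.map_smul,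
          hscale, smul_smul]
      rw [sandwich_lemma B i j] at h1
      have h2 := congrFun (congrFun h1 i) j
      simpa using h2
    -- multiplicativity of c
    have hmul : ∀ i j k, c i j * c j k = c i k := by
      intro i j k
      have h1 : σ (Matrix.single i j 1) * σ (Matrix.single j k 1)
          = σ (Matrix.single i k 1) := by
        rw [← _root_.map_mul]
        congr 1
        simp
      rw [hscale, hscale, hscale, smul_mul_smul_comm] at h1
      simp only [Matrix.single_mul_single_same, one_mul] at h1
      have h2 := congrFun (congrFun h1 i) k
      simpa using h2
    have hcii : ∀ i, c i i = 1 := by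
      intro i
      rw [hc]
      simp only [hE]
      simp
    -- subdiagonal normalization forces c = 1 on adjacent pairs
    have hsub : ∀ i : Fin d, c i.succ i.castSucc = 1 := by
      intro i
      have h1 := hBA i.succ i.castSucc
      rw [hB.2.1 i, hA.2.1 i, one_mul] at h1
      exact h1.symm
    have hzero : ∀ i : Fin (d+1), c i 0 = 1 := by
      intro i
      induction i using Fin.induction with
      | zero => exact hcii 0
      | succ i ih =>
        have := hmul i.succ i.castSucc 0
        rw [hsub i, ih, one_mul] at this
        exact this.symm
    have hall : ∀ i j, c i j = 1 := by
      intro i j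
      have h1 : c j 0 * c 0 j = 1 := by rw [hmul j 0 j]; exact hcii j
      rw [hzero j, one_mul] at h1
      have h2 := hmul i 0 j
      rw [hzero i, one_mul, h1] at h2
      exact h2.symm
    ext i j
    rw [hBA i j, hall, mul_one]
  · rintro rfl
    exact ⟨AlgEquiv.refl, rfl, rfl⟩
end

section
/- Suppose char(F) = 2 and scalars h, s, s*, r, h', s', r' in F satisfy h ≠ 0, s ≠ 0, s+1 ≠ 0, s* ≠ 0, s*+1 ≠ 0, r ≠ 0, and the analogous nonvanishing conditions for the primed variables, together with: h = h', s(1+s+s*) = s'(1+s'+s*), and r(r+s+ss*) = r'(r'+s'+s's*). Then either (s' = s and (r' = r or r' = r+s+ss*)), or (s' = 1+s+s*, r+r' ≠ 0, and (r+r')/(1+s*) + r'(1+s*)/(r+r') = s). -/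
/-- solutions of the type IV compatibility equations in
characteristic 2 (here `sS` plays the role of s* and `hS` the role of h*). -/
theorem stmt19 {F : Type*} [Field F] [IsAlgClosed F] [CharP F 2]
    (h s sS hS r h' s' r' : F)
    (hne1 : h ≠ 0) (hne2 : s ≠ 0) (hne3 : s + 1 ≠ 0)
    (hne4 : hS ≠ 0) (hne5 : sS ≠ 0) (hne6 : sS + 1 ≠ 0)
    (hne7 : r ≠ 0) (hne8 : r + s + sS ≠ 0)
    (hne9 : r + s + s * sS ≠ 0) (hne10 : r + sS + s * sS ≠ 0)
    (hne1' : h' ≠ 0) (hne2' : s' ≠ 0) (hne3' : s' + 1 ≠ 0)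
    (hne7' : r' ≠ 0) (hne8' : r' + s' + sS ≠ 0)
    (hne9' : r' + s' + s' * sS ≠ 0) (hne10' : r' + sS + s' * sS ≠ 0)
    (e1 : h = h')
    (e2 : s * (1 + s + sS) = s' * (1 + s' + sS))
    (e3 : r * (r + s + s * sS) = r' * (r' + s' + s' * sS)) :
    (s' = s ∧ (r' = r ∨ r' = r + s + s * sS)) ∨
    (s' = 1 + s + sS ∧ r + r' ≠ 0 ∧
      (r + r') / (1 + sS) + r' * (1 + sS) / (r + r') = s) := by
  have h2 : (2 : F) = 0 := by
    have := CharP.cast_eq_zero F 2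
    simpa using this
  have key : (s + s') * (1 + s + s' + sS) = 0 := by
    linear_combination e2 + (s * s' + s' + s' ^ 2 + s' * sS) * h2
  rcases mul_eq_zero.mp key with hss | hss
  · -- s' = s
    have hs' : s' = s := by linear_combination hss - s * h2
    left
    refine ⟨hs', ?_⟩
    have key2 : (r + r') * (r + r' + s + s * sS) = 0 := by
      linear_combination e3 - r' * (1 + sS) * hs' +
        (r' ^ 2 + r * r' + s' * r' + s' * r' * sS) * h2
    rcases mul_eq_zero.mp key2 with hrr | hrr
    · left; linear_combination hrr - r * h2
    · right; linear_combination hrr - (r + s + s * sS) * h2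
  · -- s' = 1 + s + sS
    have hs' : s' = 1 + s + sS := by
      linear_combination hss - (s + sS + 1) * h2
    right
    have h1sS : (1 : F) + sS ≠ 0 := by
      intro hc; exact hne6 (by linear_combination hc)
    have hrr : r + r' ≠ 0 := by
      intro hc
      have hr : r = r' := by linear_combination hc - r' * h2
      have hsq : r' * ((1 : F) + sS) ^ 2 = 0 := by
        linear_combination e3 - (r + r' + s + s * sS) * hr + r' * (1 + sS) * hs' +
          r' * (1 + sS) ^ 2 * h2
      rcases mul_eq_zero.mp hsq with hz | hz
      · exact hne7' hz
      · exact h1sS (pow_eq_zero_iff (by norm_num) |>.mp hz)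
    refine ⟨hs', hrr, ?_⟩
    have key3 : (r + r') ^ 2 + r' * (1 + sS) ^ 2 = s * (1 + sS) * (r + r') := by
      linear_combination e3 + r' * (1 + sS) * hs' +
        (r * r' + r' ^ 2 + r' + 2 * r' * sS + r' * sS ^ 2 - s * r - s * sS * r) * h2
    rw [div_add_div _ _ h1sS hrr, div_eq_iff (mul_ne_zero h1sS hrr)]
    linear_combination key3
end
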